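/- Let X_1,...,X_n be independent non-negative random variables, T a real number, and p = Pr[max_i X_i ≥ T]. Let τ be the first index i with X_i ≥ T. Then for every x > T, Pr[X_τ > x] ≥ (1-p)·Σ_{i=1}^n Pr[X_i > x]. -/

import Mathlib

open MeasureTheory ProbabilityTheory

/-- For any `x > T`, the probability that the threshold stopping rule's payoff exceeds `x` is at
least `(1-p)` times the sum of the probabilities `Pr[X_i > x]`, where `p = Pr[max_i X_i ≥ T]`. -/
theorem stmt1 {Ω : Type*} [MeasurableSpace Ω] (μ : Measure Ω) [IsProbabilityMeasure μ]
    (n : ℕ) [NeZero n] (X : Fin n → Ω → ℝ)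
    (hmeas : ∀ i, Measurable (X i))
    (hnonneg : ∀ i ω, 0 ≤ X i ω)
    (hindep : iIndepFun X μ)
    (T : ℝ) (p : ℝ)
    (hp : p = (μ {ω | T ≤ Finset.univ.sup' Finset.univ_nonempty (fun i => X i ω)}).toReal)
    (payoff : Ω → ℝ)
    (hpayoff : ∀ ω, payoff ω =
      if h : ((Finset.univ : Finset (Fin n)).filter (fun i => T ≤ X i ω)).Nonempty
      then X (((Finset.univ : Finset (Fin n)).filter (fun i => T ≤ X i ω)).min' h) ω
      else 0)
    (x : ℝ) (hx : T < x) :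
    (1 - p) * ∑ i, (μ {ω | x < X i ω}).toReal ≤ (μ {ω | x < payoff ω}).toReal := by
  classical
  set S : Set Ω := {ω | T ≤ Finset.univ.sup' Finset.univ_nonempty (fun i => X i ω)} with hSdef
  -- index sets
  set s : Fin n → Finset (Fin n) := fun i => Finset.univ.filter (· < i) with hs
  -- the relevant events
  set sets : Fin n → Fin n → Set ℝ :=
    fun i j => if j = i then Set.Ioi x else Set.Iio T with hsets
  set A : Fin n → Set Ω := fun i => ⋂ j ∈ insert i (s i), X j ⁻¹' sets i j with hA
  set B : Fin n → Set Ω := fun i => ⋂ j ∈ s i, X j ⁻¹' Set.Iio T with hB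
  have hinotin : ∀ i : Fin n, i ∉ s i := by
    intro i; simp [hs]
  have hAmem : ∀ i ω, ω ∈ A i ↔ x < X i ω ∧ ∀ j, j < i → X j ω < T := by
    intro i ω
    constructor
    · intro h
      simp only [hA, Set.mem_iInter] at h
      refine ⟨?_, ?_⟩
      · have := h i (Finset.mem_insert_self i _)
        simpa [hsets] using this
      · intro j hj
        have := h j (Finset.mem_insert_of_mem (by simp [hs, hj]))
        simpa [hsets, ne_of_lt hj] using this
    · rintro ⟨h1, h2⟩
      simp only [hA, Set.mem_iInter]
      intro j hj
      rcases Finset.mem_insert.mp hj with rfl | hj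
      · simpa [hsets] using h1
      · have hjlt : j < i := by simpa [hs] using hj
        simpa [hsets, ne_of_lt hjlt] using h2 j hjlt
  -- complement of S
  have hScompl : Sᶜ = ⋂ j ∈ (Finset.univ : Finset (Fin n)), X j ⁻¹' Set.Iio T := by
    ext ω
    simp only [hSdef, Set.mem_compl_iff, Set.mem_setOf_eq, not_le, Set.mem_iInter,
      Set.mem_preimage, Set.mem_Iio, Finset.mem_univ, true_implies]
    rw [Finset.sup'_lt_iff]
    simp
  have hScomplMeas : MeasurableSet Sᶜ := by
    rw [hScompl]
    exact Finset.measurableSet_biInter _ (fun j _ => (hmeas j) measurableSet_Iio)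
  have hSmeas : MeasurableSet S := by
    rw [← compl_compl S]; exact hScomplMeas.compl
  have hpS : (μ Sᶜ).toReal = 1 - p := by
    rw [measure_compl hSmeas (measure_ne_top μ S), measure_univ, hp,
      ENNReal.toReal_sub_of_le prob_le_one ENNReal.one_ne_top, ENNReal.toReal_one]
  -- measure of A i
  have hAmeas : ∀ i, μ (A i) = μ {ω | x < X i ω} * μ (B i) := by
    intro i
    have h1 : μ (A i) = ∏ j ∈ insert i (s i), μ (X j ⁻¹' sets i j) := by
      refine hindep.measure_inter_preimage_eq_mul _ ?_
      intro j _
      by_cases hj : j = i <;> simp [hsets, hj, measurableSet_Ioi, measurableSet_Iio]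
    have h2 : μ (B i) = ∏ j ∈ s i, μ (X j ⁻¹' Set.Iio T) := by
      refine hindep.measure_inter_preimage_eq_mul (sets := fun _ => Set.Iio T) _ ?_
      intro j _; exact measurableSet_Iio
    rw [h1, Finset.prod_insert (hinotin i), h2]
    congr 1
    · simp [hsets, Set.preimage, Set.Ioi]
    · refine Finset.prod_congr rfl fun j hj => ?_
      have hjlt : j < i := by simpa [hs] using hj
      simp [hsets, ne_of_lt hjlt]
  have hSsubB : ∀ i, μ Sᶜ ≤ μ (B i) := by
    intro i
    refine measure_mono ?_
    rw [hScompl]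
    intro ω hω
    simp only [hB, Set.mem_iInter] at *
    intro j hj
    exact hω j (Finset.mem_univ j)
  -- key per-index inequality
  have key : ∀ i, (1 - p) * (μ {ω | x < X i ω}).toReal ≤ (μ (A i)).toReal := by
    intro i
    rw [hAmeas i, ENNReal.toReal_mul, mul_comm ((μ {ω | x < X i ω}).toReal)]
    have h1 : 1 - p ≤ (μ (B i)).toReal := by
      rw [← hpS]
      exact ENNReal.toReal_mono (measure_ne_top μ _) (hSsubB i)
    exact mul_le_mul_of_nonneg_right h1 ENNReal.toReal_nonneg
  -- the A i are pairwise disjoint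
  have hdisj : Pairwise (Function.onFun Disjoint A) := by
    intro i j hij
    have main : ∀ i j : Fin n, i < j → Disjoint (A i) (A j) := by
      intro i j hij
      rw [Set.disjoint_left]
      intro ω hi hj
      have h1 := ((hAmem i ω).mp hi).1
      have h2 := ((hAmem j ω).mp hj).2 i hij
      linarith
    rcases lt_or_gt_of_ne hij with h | h
    · exact main i j h
    · exact (main j i h).symm
  have hAmeasSet : ∀ i, MeasurableSet (A i) := by
    intro i
    exact Finset.measurableSet_biInter _ fun j _ => (hmeas j) (by
      by_cases hj : j = i <;> simp [hsets, hj, measurableSet_Ioi, measurableSet_Iio])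
  -- union of A i is contained in the target
  have hsub : (⋃ i, A i) ⊆ {ω | x < payoff ω} := by
    intro ω hω
    rcases Set.mem_iUnion.mp hω with ⟨i, hi⟩
    obtain ⟨h1, h2⟩ := (hAmem i ω).mp hi
    have hiF : i ∈ (Finset.univ : Finset (Fin n)).filter (fun i => T ≤ X i ω) := by
      simp [le_of_lt (hx.trans h1)]
    have hne : ((Finset.univ : Finset (Fin n)).filter (fun i => T ≤ X i ω)).Nonempty :=
      ⟨i, hiF⟩
    have hmin : ((Finset.univ : Finset (Fin n)).filter (fun i => T ≤ X i ω)).min' hne = i := by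
      refine le_antisymm (Finset.min'_le _ _ hiF) ?_
      by_contra hlt
      push_neg at hlt
      have hmem := Finset.min'_mem _ hne
      have : T ≤ X (((Finset.univ : Finset (Fin n)).filter (fun i => T ≤ X i ω)).min' hne) ω := by
        simpa using (Finset.mem_filter.mp hmem).2
      have := h2 _ hlt
      linarith
    show x < payoff ω
    rw [hpayoff ω, dif_pos hne, hmin]
    exact h1
  -- put it together
  calc (1 - p) * ∑ i, (μ {ω | x < X i ω}).toReal
      = ∑ i, (1 - p) * (μ {ω | x < X i ω}).toReal := by rw [Finset.mul_sum]
    _ ≤ ∑ i, (μ (A i)).toReal := Finset.sum_le_sum fun i _ => key i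
    _ = (∑ i, μ (A i)).toReal := (ENNReal.toReal_sum fun i _ => measure_ne_top μ _).symm
    _ = (μ (⋃ i, A i)).toReal := by
        rw [measure_iUnion hdisj hAmeasSet, tsum_fintype]
    _ ≤ (μ {ω | x < payoff ω}).toReal :=
        ENNReal.toReal_mono (measure_ne_top μ _) (measure_mono hsub)
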